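/- arXiv:1507.00518 — 2 statements merged into one kernel-verified Lean document; each statement's English description precedes it below -/
import Mathlib

section
/- Let c > 0 and δ > 0. Then for every real ξ > 0, (1/(2πi)) ∫_{c-i∞}^{c+i∞} ((e^{δs} - 1)² / s²) ξ^s ds = min(log(e^{2δ} ξ), log(1/ξ)) if e^{-2δ} ≤ ξ ≤ 1, and equals 0 otherwise. -/
open Complex Real

noncomputable section SoundAux

open MeasureTheory Set Filter FourierTransform
open scoped Topology

namespace SoundAux

lemma norm_aux (z : ℂ) (t : ℝ) :
    ‖(t : ℂ) * Complex.exp (-(z * t))‖ = |t| * Real.exp (-(z.re * t)) := by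
  rw [norm_mul, Complex.norm_exp]
  simp

lemma decay1 {r : ℝ} (hr : 0 < r) :
    Tendsto (fun t : ℝ => t * Real.exp (-(r * t))) atTop (𝓝 0) := by
  have h := (tendsto_pow_mul_exp_neg_atTop_nhds_zero 1).comp
    (tendsto_id.const_mul_atTop hr)
  have h2 : Tendsto (fun t : ℝ => (r * t) * Real.exp (-(r * t))) atTop (𝓝 0) := by
    simpa [Function.comp_def] using h
  have h3 := h2.const_mul r⁻¹
  rw [mul_zero] at h3
  refine h3.congr fun t => ?_
  field_simp

lemma decay0 {r : ℝ} (hr : 0 < r) :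
    Tendsto (fun t : ℝ => Real.exp (-(r * t))) atTop (𝓝 0) := by
  have : Tendsto (fun t : ℝ => -(r * t)) atTop atBot :=
    tendsto_neg_atTop_atBot.comp (tendsto_id.const_mul_atTop hr)
  exact Real.tendsto_exp_atBot.comp this

lemma int1 (z : ℂ) (hz : 0 < z.re) :
    IntegrableOn (fun t : ℝ => (t : ℂ) * Complex.exp (-(z * t))) (Ioi 0) := by
  have h1 : IntegrableOn (fun x : ℝ => x ^ (1 : ℝ) * Real.exp (-z.re * x ^ (1 : ℝ)))
      (Ioi 0) := integrableOn_rpow_mul_exp_neg_mul_rpow (by norm_num) zero_lt_one hz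
  have h1' : IntegrableOn (fun x : ℝ => x * Real.exp (-(z.re * x))) (Ioi 0) := by
    simpa [Real.rpow_one, neg_mul] using h1
  refine Integrable.mono' h1' ?_ ?_
  · exact (Continuous.aestronglyMeasurable (by fun_prop)).restrict
  · filter_upwards [ae_restrict_mem measurableSet_Ioi] with t ht
    rw [norm_aux, abs_of_pos ht]

lemma int2 (z : ℂ) (hz : 0 < z.re) :
    ∫ t in Ioi (0 : ℝ), (t : ℂ) * Complex.exp (-(z * t)) = 1 / z ^ 2 := by
  have hz0 : z ≠ 0 := fun h => by simp [h] at hz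
  set F : ℝ → ℂ := fun t => -((t : ℂ) * z + 1) / z ^ 2 * Complex.exp (-(z * t)) with hF
  have hderiv : ∀ t ∈ Ioi (0 : ℝ),
      HasDerivAt F ((t : ℂ) * Complex.exp (-(z * t))) t := by
    intro t _
    have hG : HasDerivAt (fun w : ℂ => -(w * z + 1) / z ^ 2 * Complex.exp (-(z * w)))
        ((t : ℂ) * Complex.exp (-(z * (t : ℂ)))) (t : ℂ) := by
      have h1 : HasDerivAt (fun w : ℂ => -(w * z + 1) / z ^ 2) (-(1 * z) / z ^ 2) (t : ℂ) :=
        (((hasDerivAt_id _).mul_const z).add_const 1).neg.div_const (z ^ 2)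
      have h2 : HasDerivAt (fun w : ℂ => Complex.exp (-(z * w)))
          (-z * Complex.exp (-(z * (t : ℂ)))) (t : ℂ) := by
        have h0 : HasDerivAt (fun w : ℂ => -(z * w)) (-z) (t : ℂ) := by
          simpa using ((hasDerivAt_id (t : ℂ)).const_mul z).fun_neg
        simpa [mul_comm] using h0.cexp
      have h3 := h1.fun_mul h2
      refine h3.congr_deriv ?_
      have hexp : Complex.exp (-(z * (t : ℂ))) ≠ 0 := Complex.exp_ne_zero _
      field_simp
      ring
    exact hG.comp_ofReal
  have htend : Tendsto F atTop (𝓝 0) := by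
    have hbd : ∀ᶠ t in atTop, ‖F t‖ ≤ (t * ‖z‖ + 1) / ‖z‖ ^ 2 * Real.exp (-(z.re * t)) := by
      filter_upwards [eventually_ge_atTop (0 : ℝ)] with t ht
      rw [hF]
      simp only [norm_mul, norm_div, norm_neg, norm_pow]
      rw [Complex.norm_exp]
      have hre : (-(z * (t : ℂ))).re = -(z.re * t) := by simp
      rw [hre]
      gcongr
      calc ‖(t : ℂ) * z + 1‖ ≤ ‖(t : ℂ) * z‖ + ‖(1 : ℂ)‖ := norm_add_le _ _
        _ = t * ‖z‖ + 1 := by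
            rw [norm_mul, norm_one, Complex.norm_real, Real.norm_eq_abs, _root_.abs_of_nonneg ht]
    refine squeeze_zero_norm' hbd ?_
    have h1 := ((decay1 hz).const_mul ‖z‖).add (decay0 hz)
    simp only [mul_zero, add_zero] at h1
    have h2 := h1.const_mul (‖z‖ ^ 2)⁻¹
    rw [mul_zero] at h2
    refine h2.congr fun t => ?_
    ring
  have hcont : ContinuousWithinAt F (Ici (0 : ℝ)) 0 :=
    ((by fun_prop : Continuous F).continuousAt).continuousWithinAt
  have hint := integral_Ioi_of_hasDerivAt_of_tendsto hcont hderiv (int1 z hz) htend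
  rw [hint, hF]
  norm_num
  rw [neg_div, neg_neg, one_div]

variable {c : ℝ}


noncomputable def g (c : ℝ) : ℝ → ℂ :=
  fun t => ((max t 0 : ℝ) : ℂ) * Complex.exp (-((c : ℂ) * t))

lemma g_eq_indicator :
    g c = Set.indicator (Ioi (0 : ℝ)) (fun t : ℝ => (t : ℂ) * Complex.exp (-((c : ℂ) * t))) := by
  funext t
  rcases lt_or_ge 0 t with ht | ht
  · rw [Set.indicator_of_mem (by exact ht)]
    simp [g, max_eq_left ht.le]
  · rw [Set.indicator_of_notMem (by simpa using ht)]
    simp [g, max_eq_right ht]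

lemma g_cont : Continuous (g c) := by
  unfold g
  fun_prop

lemma g_integrable (hc : 0 < c) : Integrable (g c) := by
  rw [g_eq_indicator, MeasureTheory.integrable_indicator_iff measurableSet_Ioi]
  exact int1 (c : ℂ) (by simpa using hc)

lemma fourier_g (hc : 0 < c) (ξ : ℝ) :
    (𝓕 (g c)) ξ = 1 / ((c : ℂ) + 2 * π * ξ * Complex.I) ^ 2 := by
  rw [Real.fourier_real_eq_integral_exp_smul]
  have hre : 0 < ((c : ℂ) + 2 * π * ξ * Complex.I).re := by simpa using hc
  have heq : ∀ v : ℝ, Complex.exp (↑(-2 * π * v * ξ) * Complex.I) • g c v =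
      Set.indicator (Ioi (0 : ℝ))
        (fun t : ℝ => (t : ℂ) *
          Complex.exp (-(((c : ℂ) + 2 * π * ξ * Complex.I) * t))) v := by
    intro v
    rcases lt_or_ge 0 v with hv | hv
    · rw [Set.indicator_of_mem (by exact hv)]
      rw [g_eq_indicator, Set.indicator_of_mem (by exact hv)]
      rw [smul_eq_mul, mul_comm (Complex.exp _) _, mul_assoc, ← Complex.exp_add]
      congr 2
      push_cast
      ring
    · rw [Set.indicator_of_notMem (by simpa using hv)]
      rw [g_eq_indicator, Set.indicator_of_notMem (by simpa using hv)]
      simp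
  rw [MeasureTheory.integral_congr_ae (Filter.Eventually.of_forall heq),
    MeasureTheory.integral_indicator measurableSet_Ioi]
  exact int2 _ hre

lemma normSq_aux (a b : ℝ) : ‖((a : ℂ) + b * Complex.I) ^ 2‖ = a ^ 2 + b ^ 2 := by
  rw [norm_pow]
  rw [show ‖(a : ℂ) + b * Complex.I‖ ^ 2 = Complex.normSq ((a : ℂ) + b * Complex.I) by
    rw [Complex.normSq_eq_norm_sq]]
  exact Complex.normSq_add_mul_I a b

lemma integrable_gen (hc : 0 < c) {k B : ℝ} (hk : 0 < k) (e : ℝ → ℂ) (he : Continuous e)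
    (heb : ∀ τ : ℝ, ‖e τ‖ ≤ B) :
    Integrable (fun τ : ℝ => e τ / ((c : ℂ) + k * τ * Complex.I) ^ 2) := by
  have hne : ∀ τ : ℝ, ((c : ℂ) + k * τ * Complex.I) ≠ 0 := by
    intro τ h
    have h2 : ((c : ℂ) + k * τ * Complex.I).re = 0 := by rw [h]; simp
    simp at h2
    exact hc.ne' h2
  have hcontf : Continuous (fun τ : ℝ => e τ / ((c : ℂ) + k * τ * Complex.I) ^ 2) := by
    refine he.div (by fun_prop) fun τ => pow_ne_zero 2 (hne τ)
  set C : ℝ := max (c ^ 2)⁻¹ (k ^ 2)⁻¹ with hC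
  have hC0 : 0 < C := lt_max_of_lt_left (by positivity)
  refine Integrable.mono' ((integrable_inv_one_add_sq).const_mul (B * C))
    hcontf.aestronglyMeasurable ?_
  refine Filter.Eventually.of_forall fun τ => ?_
  have hnorm : ‖((c : ℂ) + k * τ * Complex.I) ^ 2‖ = c ^ 2 + (k * τ) ^ 2 := by
    have := normSq_aux c (k * τ)
    rw [← this]
    norm_cast
  rw [norm_div, hnorm]
  have hB0 : 0 ≤ B := le_trans (norm_nonneg _) (heb 0)
  have key : (1 : ℝ) + τ ^ 2 ≤ C * (c ^ 2 + (k * τ) ^ 2) := by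
    have h1 : (1 : ℝ) ≤ C * c ^ 2 := by
      calc (1 : ℝ) = (c ^ 2)⁻¹ * c ^ 2 := by field_simp
        _ ≤ C * c ^ 2 := by gcongr; exact le_max_left _ _
    have h2 : τ ^ 2 ≤ C * (k * τ) ^ 2 := by
      calc τ ^ 2 = (k ^ 2)⁻¹ * (k * τ) ^ 2 := by field_simp
        _ ≤ C * (k * τ) ^ 2 := by gcongr; exact le_max_right _ _
    calc (1 : ℝ) + τ ^ 2 ≤ C * c ^ 2 + C * (k * τ) ^ 2 := add_le_add h1 h2
      _ = C * (c ^ 2 + (k * τ) ^ 2) := by ring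
  have hpos1 : (0 : ℝ) < c ^ 2 + (k * τ) ^ 2 := by positivity
  have hpos2 : (0 : ℝ) < 1 + τ ^ 2 := by positivity
  calc ‖e τ‖ / (c ^ 2 + (k * τ) ^ 2) ≤ B / (c ^ 2 + (k * τ) ^ 2) := by gcongr; exact heb τ
    _ ≤ B * C * (1 + τ ^ 2)⁻¹ := by
        rw [← div_eq_mul_inv, div_le_div_iff₀ hpos1 hpos2]
        nlinarith [mul_le_mul_of_nonneg_left key hB0]

lemma fourier_g_integrable (hc : 0 < c) : Integrable (𝓕 (g c)) := by
  have h : 𝓕 (g c) = fun ξ : ℝ => 1 / ((c : ℂ) + ((2 * π : ℝ) : ℂ) * ξ * Complex.I) ^ 2 := by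
    funext ξ
    rw [fourier_g hc ξ]
    norm_num
  rw [h]
  exact integrable_gen hc (k := 2 * π) (B := 1) (by positivity) (fun _ => 1) continuous_const
    (fun τ => by norm_num)

lemma integrable_h (hc : 0 < c) (a : ℝ) :
    Integrable (fun τ : ℝ =>
      Complex.exp ((a : ℂ) * ((c : ℂ) + τ * Complex.I)) / ((c : ℂ) + τ * Complex.I) ^ 2) := by
  have := integrable_gen hc one_pos
    (fun τ : ℝ => Complex.exp ((a : ℂ) * ((c : ℂ) + τ * Complex.I))) (by fun_prop)
    (B := Real.exp (a * c))
    (fun τ => le_of_eq (by rw [Complex.norm_exp]; congr 1; simp))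
  simpa using this

lemma key (hc : 0 < c) (a : ℝ) :
    ∫ τ : ℝ, Complex.exp ((a : ℂ) * ((c : ℂ) + τ * Complex.I)) / ((c : ℂ) + τ * Complex.I) ^ 2
      = 2 * π * (max a 0) := by
  have hinv : 𝓕⁻ (𝓕 (g c)) a = g c a :=
    (g_integrable hc).fourierInv_fourier_eq (fourier_g_integrable hc) g_cont.continuousAt
  set φ : ℝ → ℂ := fun τ => Complex.exp ((a : ℂ) * τ * Complex.I) / ((c : ℂ) + τ * Complex.I) ^ 2
    with hφ
  have hstep : 𝓕⁻ (𝓕 (g c)) a = ∫ ξ : ℝ, φ (2 * π * ξ) := by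
    rw [Real.fourierInv_eq_fourier_neg,
      Real.fourier_real_eq_integral_exp_smul]
    refine MeasureTheory.integral_congr_ae (Filter.Eventually.of_forall fun ξ => ?_)
    dsimp only
    rw [fourier_g hc ξ, smul_eq_mul, hφ]
    dsimp only
    have e1 : ((-2 * π * ξ * (-a) : ℝ) : ℂ) * Complex.I = (a : ℂ) * ↑(2 * π * ξ) * Complex.I := by
      push_cast; ring
    have e2 : ((c : ℂ) + 2 * ↑π * ↑ξ * Complex.I) = (c : ℂ) + ↑(2 * π * ξ) * Complex.I := by
      push_cast; ring
    rw [e1, e2, mul_one_div]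
  have hsub : ∫ ξ : ℝ, φ (2 * π * ξ) = |(2 * π)⁻¹| • ∫ τ : ℝ, φ τ :=
    MeasureTheory.Measure.integral_comp_mul_left φ (2 * π)
  have h2π : (0:ℝ) < 2 * π := by positivity
  have hφint : ∫ τ : ℝ, φ τ = (2 * π : ℝ) • g c a := by
    rw [← hinv, hstep, hsub, smul_smul, abs_of_pos (by positivity), mul_inv_cancel₀ h2π.ne',
      one_smul]
  have hfinal : ∀ τ : ℝ,
      Complex.exp ((a : ℂ) * ((c : ℂ) + τ * Complex.I)) / ((c : ℂ) + τ * Complex.I) ^ 2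
        = Complex.exp ((a : ℂ) * c) * φ τ := by
    intro τ
    show _ = Complex.exp ((a : ℂ) * c) *
      (Complex.exp ((a : ℂ) * τ * Complex.I) / ((c : ℂ) + τ * Complex.I) ^ 2)
    rw [← mul_div_assoc, ← Complex.exp_add]
    congr 2
    ring
  rw [MeasureTheory.integral_congr_ae (Filter.Eventually.of_forall hfinal),
    MeasureTheory.integral_const_mul, hφint]
  simp only [g, Complex.real_smul]
  have hone : Complex.exp ((a : ℂ) * c) * Complex.exp (-((c : ℂ) * a)) = 1 := by
    rw [← Complex.exp_add, show ((a : ℂ) * c + -((c : ℂ) * a)) = 0 by ring, Complex.exp_zero]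
  push_cast
  linear_combination ((2 : ℂ) * π * (max a 0 : ℝ)) * hone

end SoundAux

open SoundAux MeasureTheory Set Filter in
/-- Soundararajan's smoothing device: the vertical-line contour integral
(1/(2πi)) ∫_{c-i∞}^{c+i∞} ((e^{δs}-1)²/s²) ξ^s ds, parametrized by s = c + iτ
(so that ds = i dτ and the prefactor becomes 1/(2π)). -/
theorem soundararajan_device (c δ ξ : ℝ) (hc : 0 < c) (hδ : 0 < δ) (hξ : 0 < ξ) :
    (1 / (2 * Real.pi)) •
        ∫ τ : ℝ, (Complex.exp (δ * (c + τ * Complex.I)) - 1) ^ 2 / (c + τ * Complex.I) ^ 2 *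
          (ξ : ℂ) ^ ((c : ℂ) + τ * Complex.I)
      = if Real.exp (-2 * δ) ≤ ξ ∧ ξ ≤ 1 then
          ((min (Real.log (Real.exp (2 * δ) * ξ)) (Real.log (1 / ξ)) : ℝ) : ℂ)
        else 0 := by
  set u : ℝ := Real.log ξ with hu
  have hpt : ∀ τ : ℝ,
      (Complex.exp (δ * (c + τ * Complex.I)) - 1) ^ 2 / (c + τ * Complex.I) ^ 2 *
          (ξ : ℂ) ^ ((c : ℂ) + τ * Complex.I)
        = Complex.exp (((u + 2 * δ : ℝ) : ℂ) * ((c : ℂ) + τ * Complex.I)) /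
              ((c : ℂ) + τ * Complex.I) ^ 2
          - 2 * (Complex.exp (((u + δ : ℝ) : ℂ) * ((c : ℂ) + τ * Complex.I)) /
              ((c : ℂ) + τ * Complex.I) ^ 2)
          + Complex.exp ((u : ℂ) * ((c : ℂ) + τ * Complex.I)) /
              ((c : ℂ) + τ * Complex.I) ^ 2 := by
    intro τ
    set s : ℂ := (c : ℂ) + τ * Complex.I with hs
    have hξs : (ξ : ℂ) ^ s = Complex.exp ((u : ℂ) * s) := by
      rw [Complex.cpow_def_of_ne_zero (by exact_mod_cast hξ.ne'),
        ← Complex.ofReal_log hξ.le]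
    have e2 : Complex.exp (((u + 2 * δ : ℝ) : ℂ) * s)
        = Complex.exp ((δ : ℂ) * s) * Complex.exp ((δ : ℂ) * s) *
          Complex.exp ((u : ℂ) * s) := by
      rw [← Complex.exp_add, ← Complex.exp_add]
      congr 1
      push_cast
      ring
    have e1 : Complex.exp (((u + δ : ℝ) : ℂ) * s)
        = Complex.exp ((δ : ℂ) * s) * Complex.exp ((u : ℂ) * s) := by
      rw [← Complex.exp_add]
      congr 1
      push_cast
      ring
    rw [hξs, e2, e1]
    ring
  rw [MeasureTheory.integral_congr_ae (Filter.Eventually.of_forall hpt)]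
  have i1 := integrable_h hc (u + 2 * δ)
  have i2 := integrable_h hc (u + δ)
  have i3 := integrable_h hc u
  have hsplit : (∫ τ : ℝ,
      (Complex.exp (((u + 2 * δ : ℝ) : ℂ) * ((c : ℂ) + τ * Complex.I)) /
              ((c : ℂ) + τ * Complex.I) ^ 2
          - 2 * (Complex.exp (((u + δ : ℝ) : ℂ) * ((c : ℂ) + τ * Complex.I)) /
              ((c : ℂ) + τ * Complex.I) ^ 2)
          + Complex.exp ((u : ℂ) * ((c : ℂ) + τ * Complex.I)) /
              ((c : ℂ) + τ * Complex.I) ^ 2))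
      = (∫ τ : ℝ, Complex.exp (((u + 2 * δ : ℝ) : ℂ) * ((c : ℂ) + τ * Complex.I)) /
              ((c : ℂ) + τ * Complex.I) ^ 2)
        - 2 * (∫ τ : ℝ, Complex.exp (((u + δ : ℝ) : ℂ) * ((c : ℂ) + τ * Complex.I)) /
              ((c : ℂ) + τ * Complex.I) ^ 2)
        + ∫ τ : ℝ, Complex.exp ((u : ℂ) * ((c : ℂ) + τ * Complex.I)) /
              ((c : ℂ) + τ * Complex.I) ^ 2 := by
    rw [show (2 : ℂ) * (∫ τ : ℝ, Complex.exp (((u + δ : ℝ) : ℂ) * ((c : ℂ) + τ * Complex.I)) /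
        ((c : ℂ) + τ * Complex.I) ^ 2)
      = ∫ τ : ℝ, 2 * (Complex.exp (((u + δ : ℝ) : ℂ) * ((c : ℂ) + τ * Complex.I)) /
        ((c : ℂ) + τ * Complex.I) ^ 2) from (MeasureTheory.integral_const_mul 2 _).symm]
    rw [← MeasureTheory.integral_sub i1 (i2.const_mul 2)]
    exact MeasureTheory.integral_add ((i1.sub (i2.const_mul 2))) i3
  rw [hsplit, key hc (u + 2 * δ), key hc (u + δ), key hc u]
  set V : ℝ := max (u + 2 * δ) 0 - 2 * max (u + δ) 0 + max u 0 with hV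
  have hLHS : (1 / (2 * Real.pi)) •
      (2 * (π : ℂ) * (max (u + 2 * δ) 0 : ℝ) - 2 * (2 * (π : ℂ) * (max (u + δ) 0 : ℝ))
        + 2 * (π : ℂ) * (max u 0 : ℝ)) = (V : ℂ) := by
    rw [Complex.real_smul, hV]
    have hπ : (π : ℂ) ≠ 0 := by exact_mod_cast Real.pi_ne_zero
    push_cast
    field_simp
  rw [hLHS]
  have hcond : (Real.exp (-2 * δ) ≤ ξ ∧ ξ ≤ 1) ↔ (-(2 * δ) ≤ u ∧ u ≤ 0) := by
    constructor
    · rintro ⟨h1, h2⟩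
      exact ⟨by rw [hu, Real.le_log_iff_exp_le hξ]; simpa [neg_mul] using h1,
        by rw [hu]; exact Real.log_nonpos hξ.le h2⟩
    · rintro ⟨h1, h2⟩
      constructor
      · rw [show (-2 * δ) = -(2 * δ) by ring, ← Real.le_log_iff_exp_le hξ]
        exact h1
      · have := Real.log_nonpos_iff hξ.le
        rw [← this]
        exact h2
  split_ifs with h
  · obtain ⟨h1, h2⟩ := hcond.mp h
    rw [Real.log_mul (Real.exp_ne_zero _) hξ.ne', Real.log_exp, one_div, Real.log_inv]
    norm_cast
    rcases le_total u (-δ) with hud | hud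
    · rw [hV, max_eq_right (by linarith : u ≤ 0), max_eq_right (by linarith : u + δ ≤ 0),
        max_eq_left (by linarith : 0 ≤ u + 2 * δ), min_eq_left (by linarith : 2 * δ + u ≤ -u)]
      ring
    · rw [hV, max_eq_right (by linarith : u ≤ 0), max_eq_left (by linarith : 0 ≤ u + δ),
        max_eq_left (by linarith : 0 ≤ u + 2 * δ), min_eq_right (by linarith : -u ≤ 2 * δ + u)]
      ring
  · rw [hcond.not] at h
    push_neg at h
    norm_cast
    rcases le_or_gt (-(2 * δ)) u with h1 | h1
    · have h2 : 0 < u := h h1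
      rw [hV, max_eq_left (by linarith : (0:ℝ) ≤ u), max_eq_left (by linarith : (0:ℝ) ≤ u + δ),
        max_eq_left (by linarith : (0:ℝ) ≤ u + 2 * δ)]
      ring
    · rw [hV, max_eq_right (by linarith : u ≤ 0), max_eq_right (by linarith : u + δ ≤ 0),
        max_eq_right (by linarith : u + 2 * δ ≤ 0)]
      ring

end SoundAux
end

section
/- Let (c_n)_{n≥1} be nonnegative reals with ∑_{n ≤ x} c_n = r·x + O(x^{β}) for some r > 0 and β < 1. Write each n uniquely as n = t m² with t squarefree, and suppose c_{t m²} ≤ K · c_t · τ(m)² ψ(m)² for all squarefree t and all m. Then ∑_{t ≤ x, t squarefree} c_t ≍ x as x → ∞. -/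
open Finset Real
open scoped Classical

/-- ψ(n) = ∏_{p ∣ n prime} (1 + p^{-1/2}) -/
noncomputable def psi (n : ℕ) : ℝ := ∏ p ∈ n.primeFactors, (1 + (p : ℝ) ^ (-(1/2 : ℝ)))

section helpers

lemma aux_exp (a : ℕ) : (a : ℝ) + 1 ≤ 8 * (2:ℝ) ^ ((a:ℝ)/8) := by
  set q := a / 8 with hq
  have h1 : (a : ℝ) + 1 ≤ 8 * ((q:ℝ) + 1) := by
    have h : a + 1 ≤ 8 * (q + 1) := by omega
    exact_mod_cast h
  have h2 : (q : ℝ) + 1 ≤ (2:ℝ) ^ (q:ℕ) := by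
    exact_mod_cast (Nat.lt_two_pow_self (n := q))
  have h3 : (2:ℝ) ^ (q:ℕ) ≤ (2:ℝ) ^ ((a:ℝ)/8) := by
    rw [← Real.rpow_natCast 2 q]
    apply Real.rpow_le_rpow_of_exponent_le one_le_two
    have : q * 8 ≤ a := Nat.div_mul_le_self a 8
    have := (Nat.cast_le (α := ℝ)).2 this
    push_cast at this
    linarith
  nlinarith [h2.trans h3]

lemma tau_le {m : ℕ} (hm : m ≠ 0) :
    (m.divisors.card : ℝ) ≤ 8 ^ (256:ℕ) * (m:ℝ) ^ ((1:ℝ)/8) := by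
  have hcast : (m.divisors.card : ℝ) =
      ∏ p ∈ m.primeFactors, ((m.factorization p : ℝ) + 1) := by
    rw [Nat.card_divisors hm]
    push_cast
    rfl
  have key : ∀ p ∈ m.primeFactors, (m.factorization p : ℝ) + 1 ≤
      (if p < 256 then (8:ℝ) else 1) * (((p:ℝ) ^ (m.factorization p : ℕ)) ^ ((1:ℝ)/8)) := by
    intro p hp
    have hp' := Nat.prime_of_mem_primeFactors hp
    have hp2 : (2:ℝ) ≤ p := by exact_mod_cast hp'.two_le
    set a := m.factorization p with ha
    have h2a : (2:ℝ) ^ (a:ℕ) ≤ (p:ℝ) ^ (a:ℕ) := by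
      apply pow_le_pow_left₀ (by norm_num) hp2
    have h2a8 : ((2:ℝ) ^ (a:ℕ)) ^ ((1:ℝ)/8) ≤ ((p:ℝ) ^ (a:ℕ)) ^ ((1:ℝ)/8) :=
      Real.rpow_le_rpow (by positivity) h2a (by norm_num)
    have h2rw : ((2:ℝ) ^ (a:ℕ)) ^ ((1:ℝ)/8) = (2:ℝ) ^ ((a:ℝ)/8) := by
      rw [← Real.rpow_natCast 2 a, ← Real.rpow_mul (by norm_num)]
      ring_nf
    by_cases hsmall : p < 256
    · simp only [hsmall, if_true]
      have := aux_exp a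
      rw [h2rw] at h2a8
      nlinarith
    · simp only [hsmall, if_false, one_mul]
      push_neg at hsmall
      have h256 : ((256:ℝ) ^ (a:ℕ)) ^ ((1:ℝ)/8) ≤ ((p:ℝ) ^ (a:ℕ)) ^ ((1:ℝ)/8) := by
        apply Real.rpow_le_rpow (by positivity) _ (by norm_num)
        apply pow_le_pow_left₀ (by norm_num)
        exact_mod_cast hsmall
      have h256rw : ((256:ℝ) ^ (a:ℕ)) ^ ((1:ℝ)/8) = (2:ℝ) ^ (a:ℕ) := by
        have : (256:ℝ) = 2 ^ (8:ℕ) := by norm_num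
        rw [this, ← pow_mul, ← Real.rpow_natCast 2 (8*a), ← Real.rpow_mul (by norm_num)]
        rw [← Real.rpow_natCast 2 a]
        congr 1
        push_cast
        ring
      have h2pa : (a:ℝ) + 1 ≤ (2:ℝ) ^ (a:ℕ) := by exact_mod_cast (Nat.lt_two_pow_self (n := a))
      rw [h256rw] at h256
      linarith
  calc (m.divisors.card : ℝ)
      ≤ ∏ p ∈ m.primeFactors,
        ((if p < 256 then (8:ℝ) else 1) * (((p:ℝ) ^ (m.factorization p : ℕ)) ^ ((1:ℝ)/8))) := by
        rw [hcast]
        apply Finset.prod_le_prod (fun p _ => by positivity) key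
    _ = (∏ p ∈ m.primeFactors, (if p < 256 then (8:ℝ) else 1)) *
        ∏ p ∈ m.primeFactors, (((p:ℝ) ^ (m.factorization p : ℕ)) ^ ((1:ℝ)/8)) :=
        Finset.prod_mul_distrib
    _ ≤ 8 ^ (256:ℕ) * (m:ℝ) ^ ((1:ℝ)/8) := by
        have h1 : ∏ p ∈ m.primeFactors, (((p:ℝ) ^ (m.factorization p : ℕ)) ^ ((1:ℝ)/8))
            = (m:ℝ) ^ ((1:ℝ)/8) := by
          rw [Real.finset_prod_rpow _ _ (fun p _ => by positivity)]
          congr 1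
          have h := Nat.factorization_prod_pow_eq_self hm
          rw [Finsupp.prod, Nat.support_factorization] at h
          exact_mod_cast h
        have h2 : (∏ p ∈ m.primeFactors, (if p < 256 then (8:ℝ) else 1)) ≤ 8 ^ (256:ℕ) := by
          calc ∏ p ∈ m.primeFactors, (if p < 256 then (8:ℝ) else 1)
              = ∏ p ∈ m.primeFactors.filter (· < 256), (8:ℝ) := (Finset.prod_filter _ _).symm
            _ = 8 ^ (m.primeFactors.filter (· < 256)).card := Finset.prod_const 8
            _ ≤ 8 ^ (256:ℕ) := by
                apply pow_le_pow_right₀ (by norm_num)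
                calc (m.primeFactors.filter (· < 256)).card
                    ≤ (Finset.range 256).card := Finset.card_le_card (by
                      intro p hp
                      simp only [Finset.mem_filter] at hp
                      simpa using hp.2)
                  _ = 256 := Finset.card_range 256
        rw [h1]
        apply mul_le_mul_of_nonneg_right h2 (by positivity)

lemma psi_nonneg (n : ℕ) : 0 ≤ psi n :=
  Finset.prod_nonneg fun p _ => by positivity

lemma psi_le_tau {m : ℕ} (hm : m ≠ 0) : psi m ≤ (m.divisors.card : ℝ) := by
  rw [Nat.card_divisors hm]
  push_cast
  unfold psi
  apply Finset.prod_le_prod (fun p _ => by positivity)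
  intro p hp
  have hp' := Nat.prime_of_mem_primeFactors hp
  have h1 : (p:ℝ) ^ (-(1/2 : ℝ)) ≤ 1 := by
    apply Real.rpow_le_one_of_one_le_of_nonpos
    · exact_mod_cast hp'.one_lt.le
    · norm_num
  have h2 : 1 ≤ m.factorization p := (Nat.Prime.factorization_pos_of_dvd hp'
    hm (Nat.dvd_of_mem_primeFactors hp))
  have : (1:ℝ) ≤ (m.factorization p : ℝ) := by exact_mod_cast h2
  linarith

lemma g_le {m : ℕ} (hm : m ≠ 0) (tau_le : (m.divisors.card : ℝ) ≤ 8 ^ (256:ℕ) * (m:ℝ) ^ ((1:ℝ)/8)) :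
    (m.divisors.card : ℝ) ^ 2 * psi m ^ 2 ≤ (8:ℝ) ^ (1024:ℕ) * (m:ℝ) ^ ((1:ℝ)/2) := by
  have hψ := psi_le_tau hm
  have hψ0 := psi_nonneg m
  have hτ0 : (0:ℝ) ≤ (m.divisors.card : ℝ) := by positivity
  have h4 : (m.divisors.card : ℝ) ^ 2 * psi m ^ 2 ≤ ((m.divisors.card : ℝ)) ^ 4 := by
    have : psi m ^ 2 ≤ (m.divisors.card : ℝ) ^ 2 := by nlinarith
    nlinarith
  have h5 : ((m.divisors.card : ℝ)) ^ 4 ≤ (8 ^ (256:ℕ) * (m:ℝ) ^ ((1:ℝ)/8)) ^ 4 := by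
    apply pow_le_pow_left₀ hτ0 tau_le
  have h6 : (8 ^ (256:ℕ) * (m:ℝ) ^ ((1:ℝ)/8)) ^ 4 = (8:ℝ) ^ (1024:ℕ) * (m:ℝ) ^ ((1:ℝ)/2) := by
    rw [mul_pow, ← pow_mul]
    norm_num
    rw [← Real.rpow_natCast ((m:ℝ) ^ ((1:ℝ)/8)) 4, ← Real.rpow_mul (by positivity)]
    norm_num
  linarith [h4.trans (h5.trans_eq h6)]

lemma partial_sum (c : ℕ → ℝ) (hc : ∀ n, 0 ≤ c n) (C₂ : ℝ) (hC₂ : 0 ≤ C₂)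
    (hS : ∀ N : ℕ, ∑ n ∈ Finset.Ioc 0 N, c n ≤ C₂ * N) :
    ∀ N : ℕ, ∑ t ∈ Finset.Ioc 0 N, c t * (t:ℝ) ^ (-(3/4) : ℝ) ≤ 16 * C₂ * (N:ℝ) ^ ((1/4):ℝ) := by
  intro N
  induction N using Nat.strong_induction_on with
  | _ N ih =>
    rcases Nat.eq_zero_or_pos N with h0 | hN
    · subst h0; simp
    set M := N / 2 with hM
    have hMN : M ≤ N := Nat.div_le_self N 2
    have hMlt : M < N := Nat.div_lt_self hN one_lt_two
    have hsplit : Finset.Ioc 0 M ∪ Finset.Ioc M N = Finset.Ioc 0 N :=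
      Finset.Ioc_union_Ioc_eq_Ioc (Nat.zero_le M) hMN
    have hdisj : Disjoint (Finset.Ioc 0 M) (Finset.Ioc M N) := by
      rw [Finset.disjoint_left]
      intro a ha hb
      simp only [Finset.mem_Ioc] at ha hb
      omega
    have hNpos : (0:ℝ) < N := by exact_mod_cast hN
    have hN2 : (0:ℝ) < (N:ℝ)/2 := by linarith
    -- bound for Ioc M N part
    have htail : ∑ t ∈ Finset.Ioc M N, c t * (t:ℝ) ^ (-(3/4) : ℝ)
        ≤ ((N:ℝ)/2) ^ (-(3/4) : ℝ) * (C₂ * N) := by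
      calc ∑ t ∈ Finset.Ioc M N, c t * (t:ℝ) ^ (-(3/4) : ℝ)
          ≤ ∑ t ∈ Finset.Ioc M N, c t * ((N:ℝ)/2) ^ (-(3/4) : ℝ) := by
            apply Finset.sum_le_sum
            intro t ht
            simp only [Finset.mem_Ioc] at ht
            apply mul_le_mul_of_nonneg_left _ (hc t)
            apply Real.rpow_le_rpow_of_nonpos hN2 _ (by norm_num)
            have h1 : N ≤ 2 * M + 2 := by omega
            have h2 : M + 1 ≤ t := ht.1
            have : (N:ℝ) ≤ 2 * M + 2 := by exact_mod_cast h1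
            have : ((M:ℝ) + 1) ≤ t := by exact_mod_cast h2
            linarith
        _ = ((N:ℝ)/2) ^ (-(3/4) : ℝ) * ∑ t ∈ Finset.Ioc M N, c t := by
            rw [← Finset.sum_mul]; ring
        _ ≤ ((N:ℝ)/2) ^ (-(3/4) : ℝ) * (C₂ * N) := by
            apply mul_le_mul_of_nonneg_left _ (by positivity)
            calc ∑ t ∈ Finset.Ioc M N, c t ≤ ∑ t ∈ Finset.Ioc 0 N, c t := by
                  apply Finset.sum_le_sum_of_subset_of_nonneg
                  · apply Finset.Ioc_subset_Ioc (Nat.zero_le M) le_rfl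
                  · intro t _ _; exact hc t
              _ ≤ C₂ * N := hS N
    have hhead := ih M hMlt
    have hcomb : ∑ t ∈ Finset.Ioc 0 N, c t * (t:ℝ) ^ (-(3/4) : ℝ)
        ≤ 16 * C₂ * (M:ℝ) ^ ((1/4):ℝ) + ((N:ℝ)/2) ^ (-(3/4) : ℝ) * (C₂ * N) := by
      rw [← hsplit, Finset.sum_union hdisj]
      exact add_le_add hhead htail
    -- now compare with RHS
    have h2M : 2 * M ≤ N := by omega
    have hM4 : (M:ℝ) ^ ((1/4):ℝ) ≤ ((N:ℝ)/2) ^ ((1/4):ℝ) := by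
      apply Real.rpow_le_rpow (by positivity) _ (by norm_num)
      have : (2 * M : ℝ) ≤ N := by exact_mod_cast h2M
      linarith
    set a := (2:ℝ) ^ ((1/4):ℝ) with ha_def
    have ha0 : 0 < a := Real.rpow_pos_of_pos (by norm_num) _
    have ha : (9/8:ℝ) ≤ a := by
      have h98 : ((9/8:ℝ)) ^ ((4:ℕ):ℝ) ≤ 2 := by
        rw [Real.rpow_natCast]; norm_num
      have h := Real.rpow_le_rpow (by positivity) h98 (by norm_num : (0:ℝ) ≤ 1/4)
      rwa [← Real.rpow_mul (by norm_num), (by norm_num : ((4:ℕ):ℝ) * (1/4:ℝ) = 1),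
        Real.rpow_one] at h
    have e1 : ((N:ℝ)/2) ^ ((1/4):ℝ) = (N:ℝ) ^ ((1/4):ℝ) / a := by
      rw [ha_def, Real.div_rpow hNpos.le (by norm_num)]
    have e2 : ((N:ℝ)/2) ^ (-(3/4):ℝ) = ((N:ℝ)/2) ^ ((1/4):ℝ) / ((N:ℝ)/2) := by
      have h34 : (-(3/4):ℝ) = (1/4) + (-1) := by norm_num
      rw [h34, Real.rpow_add hN2, Real.rpow_neg_one]
      ring
    set A := (N:ℝ) ^ ((1/4):ℝ) with hA_def
    have hA0 : 0 < A := Real.rpow_pos_of_pos hNpos _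
    have e3 : ((N:ℝ)/2) ^ (-(3/4):ℝ) * (C₂ * N) = 2 * C₂ * A / a := by
      rw [e2, e1]
      field_simp
    have hM4' : (M:ℝ) ^ ((1/4):ℝ) ≤ A / a := by rw [← e1]; exact hM4
    calc ∑ t ∈ Finset.Ioc 0 N, c t * (t:ℝ) ^ (-(3/4) : ℝ)
        ≤ 16 * C₂ * ((M:ℝ) ^ ((1/4):ℝ)) + ((N:ℝ)/2) ^ (-(3/4) : ℝ) * (C₂ * N) := hcomb
      _ ≤ 16 * C₂ * (A / a) + 2 * C₂ * A / a := by
          rw [e3]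
          have := mul_le_mul_of_nonneg_left hM4' (by positivity : (0:ℝ) ≤ 16 * C₂)
          linarith
      _ = 18 * C₂ * A / a := by ring
      _ ≤ 16 * C₂ * A := by
          rw [div_le_iff₀ ha0]
          nlinarith [mul_nonneg hC₂ hA0.le]

end helpers

theorem squarefree_sum_asymp (c : ℕ → ℝ) (r β K : ℝ)
    (hc : ∀ n, 0 ≤ c n) (hr : 0 < r) (hβ : β < 1) (hK : 0 < K)
    (hasymp : ∃ C : ℝ, ∀ x : ℝ, 1 ≤ x →
      |(∑ n ∈ Finset.Icc 1 ⌊x⌋₊, c n) - r * x| ≤ C * x ^ β)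
    (hmult : ∀ t m : ℕ, Squarefree t → 0 < m →
      c (t * m ^ 2) ≤ K * c t * (m.divisors.card : ℝ) ^ 2 * psi m ^ 2) :
    ∃ c₁ c₂ : ℝ, 0 < c₁ ∧ 0 < c₂ ∧ ∃ x₀ : ℝ, ∀ x : ℝ, x₀ ≤ x →
      c₁ * x ≤ ∑ t ∈ (Finset.Icc 1 ⌊x⌋₊).filter (fun t => Squarefree t), c t ∧
      ∑ t ∈ (Finset.Icc 1 ⌊x⌋₊).filter (fun t => Squarefree t), c t ≤ c₂ * x := by
  classical
  obtain ⟨C, hCbd⟩ := hasymp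
  have hC0 : 0 ≤ C := by
    have h := hCbd 1 le_rfl
    have : (0:ℝ) ≤ C * 1 ^ (β:ℝ) := le_trans (abs_nonneg _) h
    simpa using this
  set C₂ : ℝ := r + C with hC₂def
  have hC₂pos : 0 < C₂ := by positivity
  obtain ⟨B, hBpos, hgB⟩ : ∃ B : ℝ, 0 < B ∧ ∀ m : ℕ, m ≠ 0 →
      ((m.divisors.card : ℝ) ^ 2 * psi m ^ 2 ≤ B * (m:ℝ) ^ ((1/2):ℝ)) :=
    ⟨(8:ℝ) ^ (1024:ℕ), by positivity, fun m hm => g_le hm (tau_le hm)⟩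
  -- upper bound on partial sums
  have hSle : ∀ x : ℝ, 1 ≤ x → ∑ n ∈ Finset.Icc 1 ⌊x⌋₊, c n ≤ C₂ * x := by
    intro x hx
    have h := hCbd x hx
    have hxb : x ^ (β:ℝ) ≤ x := by
      have := Real.rpow_le_rpow_of_exponent_le hx hβ.le
      rwa [Real.rpow_one] at this
    have habs := abs_le.mp h
    have hx0 : (0:ℝ) < x := lt_of_lt_of_le one_pos hx
    nlinarith [habs.2]
  have hSge : ∀ x : ℝ, 1 ≤ x → r * x - C * x ^ (β:ℝ) ≤ ∑ n ∈ Finset.Icc 1 ⌊x⌋₊, c n := by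
    intro x hx
    have habs := abs_le.mp (hCbd x hx)
    linarith [habs.1]
  have hSN : ∀ N : ℕ, ∑ n ∈ Finset.Ioc 0 N, c n ≤ C₂ * N := by
    intro N
    rcases Nat.eq_zero_or_pos N with h0 | hN
    · subst h0; simp
    have h1 : (1:ℝ) ≤ (N:ℝ) := by exact_mod_cast hN
    have h2 := hSle (N:ℝ) h1
    rw [Nat.floor_natCast] at h2
    have e : Finset.Icc 1 N = Finset.Ioc 0 N := by
      ext k; simp only [Finset.mem_Icc, Finset.mem_Ioc]; omega
    rwa [← e]
  have hps := partial_sum c hc C₂ hC₂pos.le hSN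
  -- the constant δ
  set d : ℝ := r / (64 * K * B * C₂) with hd_def
  have hd0 : 0 < d := by positivity
  set δ : ℝ := min 1 (d ^ (4:ℕ)) with hδ_def
  have hδ0 : 0 < δ := lt_min one_pos (by positivity)
  have hδ1 : δ ≤ 1 := min_le_left _ _
  have hδ4 : δ ^ ((1/4):ℝ) ≤ d := by
    have h1 : δ ≤ d ^ (4:ℕ) := min_le_right _ _
    have h2 : δ ^ ((1/4):ℝ) ≤ (d ^ (4:ℕ)) ^ ((1/4):ℝ) :=
      Real.rpow_le_rpow hδ0.le h1 (by norm_num)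
    rwa [← Real.rpow_natCast d 4, ← Real.rpow_mul hd0.le,
      (by norm_num : ((4:ℕ):ℝ) * (1/4:ℝ) = 1), Real.rpow_one] at h2
  set Dδ : ℝ := (1/δ) ^ ((3/4):ℝ) with hDδ_def
  have hDδ0 : 0 < Dδ := Real.rpow_pos_of_pos (by positivity) _
  refine ⟨r / (2 * K * B * Dδ), C₂, by positivity, hC₂pos, ?_⟩
  -- choice of x₀
  refine ⟨max 1 ((4*C/r + 1) ^ ((1/(1-β)):ℝ)), ?_⟩
  intro x hx
  have hx1 : (1:ℝ) ≤ x := le_trans (le_max_left _ _) hx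
  have hx0 : (0:ℝ) < x := lt_of_lt_of_le one_pos hx1
  have hCxβ : C * x ^ (β:ℝ) ≤ (r/4) * x := by
    have h1β : (0:ℝ) < 1 - β := by linarith
    have hxx : (4*C/r + 1) ^ ((1/(1-β)):ℝ) ≤ x := le_trans (le_max_right _ _) hx
    have hbase0 : (0:ℝ) ≤ 4*C/r + 1 := by positivity
    have h2 : ((4*C/r + 1) ^ ((1/(1-β)):ℝ)) ^ ((1-β):ℝ) ≤ x ^ ((1-β):ℝ) :=
      Real.rpow_le_rpow (by positivity) hxx (by linarith)
    have h3 : ((4*C/r + 1) ^ ((1/(1-β)):ℝ)) ^ ((1-β):ℝ) = 4*C/r + 1 := by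
      rw [← Real.rpow_mul hbase0, one_div, inv_mul_cancel₀ (ne_of_gt h1β), Real.rpow_one]
    have h4 : 4*C/r ≤ x ^ ((1-β):ℝ) := by rw [h3] at h2; linarith
    have h5 : x ^ ((1-β):ℝ) * x ^ (β:ℝ) = x := by
      rw [← Real.rpow_add hx0]; norm_num
    have hxβ0 : (0:ℝ) < x ^ (β:ℝ) := Real.rpow_pos_of_pos hx0 _
    have h6 : C ≤ (r/4) * x ^ ((1-β):ℝ) := by
      have h7 := mul_le_mul_of_nonneg_left h4 (by positivity : (0:ℝ) ≤ r/4)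
      calc C = (r/4) * (4*C/r) := by field_simp
        _ ≤ (r/4) * x ^ ((1-β):ℝ) := h7
    calc C * x ^ (β:ℝ) ≤ ((r/4) * x ^ ((1-β):ℝ)) * x ^ (β:ℝ) :=
          mul_le_mul_of_nonneg_right h6 hxβ0.le
      _ = (r/4) * x := by rw [mul_assoc, h5]
  -- setup
  set N := ⌊x⌋₊ with hNdef
  have hN1 : 1 ≤ N := Nat.le_floor (by exact_mod_cast hx1)
  have hNx : (N:ℝ) ≤ x := Nat.floor_le hx0.le
  have hNpos : (0:ℝ) < (N:ℝ) := by exact_mod_cast hN1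
  set F := (Finset.Icc 1 N).filter (fun t => Squarefree t) with hFdef
  set Q := ∑ t ∈ F, c t with hQdef
  have hQ0 : 0 ≤ Q := Finset.sum_nonneg fun t _ => hc t
  have hupper : Q ≤ C₂ * x :=
    le_trans (Finset.sum_le_sum_of_subset_of_nonneg (Finset.filter_subset _ _)
      (fun i _ _ => hc i)) (hSle x hx1)
  refine ⟨?_, hupper⟩
  -- Step 1 : decomposition of the full sum over pairs
  set P := ((Finset.Icc 1 N) ×ˢ (Finset.Icc 1 N)).filter
      (fun p => Squarefree p.1 ∧ p.1 * p.2 ^ 2 ≤ N) with hPdef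
  choose a b hab hsf using Nat.sq_mul_squarefree
  have hstep1 : ∑ n ∈ Finset.Icc 1 N, c n ≤ ∑ p ∈ P, c (p.1 * p.2 ^ 2) := by
    have hinj : ∀ n ∈ Finset.Icc 1 N, ∀ n' ∈ Finset.Icc 1 N,
        (fun n => (a n, b n)) n = (fun n => (a n, b n)) n' → n = n' := by
      intro n _ n' _ h
      simp only [Prod.mk.injEq] at h
      rw [← hab n, ← hab n', h.1, h.2]
    have himg : (Finset.Icc 1 N).image (fun n => (a n, b n)) ⊆ P := by
      intro p hp
      simp only [Finset.mem_image] at hp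
      obtain ⟨n, hn, rfl⟩ := hp
      simp only [Finset.mem_Icc] at hn
      have hn0 : n ≠ 0 := by omega
      have hb0 : b n ≠ 0 := by intro h; apply hn0; rw [← hab n, h]; ring
      have ha0' : a n ≠ 0 := by intro h; apply hn0; rw [← hab n, h]; ring
      have hale : a n ≤ N := by
        have hdvd : a n ∣ n := ⟨b n ^ 2, ((hab n).symm.trans (mul_comm _ _))⟩
        exact le_trans (Nat.le_of_dvd (by omega) hdvd) hn.2
      have hble : b n ≤ N := by
        have h1 : b n ≤ b n ^ 2 := Nat.le_self_pow (by norm_num) (b n)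
        have h2 : b n ^ 2 ≤ n := by
          calc b n ^ 2 ≤ b n ^ 2 * a n := by
                nlinarith [Nat.pos_of_ne_zero ha0']
            _ = n := hab n
        omega
      simp only [hPdef, Finset.mem_filter, Finset.mem_product, Finset.mem_Icc]
      refine ⟨⟨⟨?_, hale⟩, ?_, hble⟩, hsf n, ?_⟩
      · omega
      · omega
      · rw [mul_comm, hab n]; exact hn.2
    calc ∑ n ∈ Finset.Icc 1 N, c n
        = ∑ n ∈ Finset.Icc 1 N, c (a n * b n ^ 2) := by
          apply Finset.sum_congr rfl; intro n _; rw [mul_comm, hab n]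
      _ = ∑ p ∈ (Finset.Icc 1 N).image (fun n => (a n, b n)), c (p.1 * p.2 ^ 2) := by
          rw [Finset.sum_image hinj]
      _ ≤ ∑ p ∈ P, c (p.1 * p.2 ^ 2) :=
          Finset.sum_le_sum_of_subset_of_nonneg himg (fun p _ _ => hc _)
  -- Step 2 : apply the multiplicative bound
  have hstep2 : ∑ p ∈ P, c (p.1 * p.2 ^ 2)
      ≤ ∑ p ∈ P, (K * c p.1) * ((p.2.divisors.card : ℝ) ^ 2 * psi p.2 ^ 2) := by
    apply Finset.sum_le_sum
    intro p hp
    simp only [hPdef, Finset.mem_filter, Finset.mem_product, Finset.mem_Icc] at hp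
    exact (hmult p.1 p.2 hp.2.1 (by omega : 0 < p.2)).trans_eq (by ring)
  -- Step 3 : rewrite as a double sum
  set I : ℕ → ℝ := fun t =>
    ∑ m ∈ (Finset.Icc 1 N).filter (fun m => t * m ^ 2 ≤ N),
      ((m.divisors.card : ℝ) ^ 2 * psi m ^ 2) with hIdef
  have hstep3 : ∑ p ∈ P, (K * c p.1) * ((p.2.divisors.card : ℝ) ^ 2 * psi p.2 ^ 2)
      = ∑ t ∈ F, (K * c t) * I t := by
    rw [hPdef, Finset.sum_filter, Finset.sum_product, hFdef, Finset.sum_filter]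
    apply Finset.sum_congr rfl
    intro t _
    by_cases hsq : Squarefree t
    · simp only [hIdef, hsq, true_and, if_true, Finset.sum_filter, Finset.mul_sum,
        mul_ite, mul_zero]
    · simp [hsq]
  have hI_nonneg : ∀ t, 0 ≤ I t := fun t =>
    Finset.sum_nonneg fun m _ => mul_nonneg (sq_nonneg _) (sq_nonneg _)
  -- Step 4 : bound the inner sum
  have hI : ∀ t, t ∈ F → I t ≤ B * ((N:ℝ)/(t:ℝ)) ^ ((3/4):ℝ) := by
    intro t htF
    simp only [hFdef, Finset.mem_filter, Finset.mem_Icc] at htF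
    obtain ⟨⟨ht1, htN⟩, _⟩ := htF
    have ht0 : (0:ℝ) < (t:ℝ) := by exact_mod_cast ht1
    set s := Nat.sqrt (N / t) with hs_def
    set y : ℝ := (N:ℝ)/(t:ℝ) with hy_def
    have hy0 : (0:ℝ) < y := by positivity
    have hsub : (Finset.Icc 1 N).filter (fun m => t * m ^ 2 ≤ N) ⊆ Finset.Icc 1 s := by
      intro m hm
      simp only [Finset.mem_filter, Finset.mem_Icc] at hm ⊢
      refine ⟨hm.1.1, ?_⟩
      have h1 : m * m ≤ N / t := by
        rw [Nat.le_div_iff_mul_le (by omega : 0 < t)]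
        calc m * m * t = t * m ^ 2 := by ring
          _ ≤ N := hm.2
      exact Nat.le_sqrt.mpr h1
    have hsy : (s:ℝ) ≤ y ^ ((1/2):ℝ) := by
      have h1 : s ^ 2 ≤ N / t := Nat.sqrt_le' (N / t)
      have h2 : ((s:ℝ)) ^ (2:ℕ) ≤ y := by
        have hcast : ((N / t : ℕ):ℝ) ≤ y := by rw [hy_def]; exact Nat.cast_div_le
        have h3 : ((s ^ 2 : ℕ):ℝ) ≤ ((N / t : ℕ):ℝ) := by exact_mod_cast h1
        push_cast at h3
        exact h3.trans hcast
      have h3 := Real.rpow_le_rpow (by positivity) h2 (by norm_num : (0:ℝ) ≤ 1/2)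
      rwa [← Real.rpow_natCast (s:ℝ) 2, ← Real.rpow_mul (by positivity),
        (by norm_num : ((2:ℕ):ℝ) * (1/2:ℝ) = 1), Real.rpow_one] at h3
    have hy14 : (s:ℝ) ^ ((1/2):ℝ) ≤ y ^ ((1/4):ℝ) := by
      have h := Real.rpow_le_rpow (Nat.cast_nonneg s) hsy (by norm_num : (0:ℝ) ≤ 1/2)
      rwa [← Real.rpow_mul hy0.le, (by norm_num : (1/2:ℝ) * (1/2:ℝ) = (1/4:ℝ))] at h
    have hIle1 : I t ≤ ∑ m ∈ Finset.Icc 1 s, (B * (m:ℝ) ^ ((1/2):ℝ)) := by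
      calc I t ≤ ∑ m ∈ Finset.Icc 1 s, ((m.divisors.card : ℝ) ^ 2 * psi m ^ 2) :=
            Finset.sum_le_sum_of_subset_of_nonneg hsub
              (fun m _ _ => mul_nonneg (sq_nonneg _) (sq_nonneg _))
        _ ≤ ∑ m ∈ Finset.Icc 1 s, (B * (m:ℝ) ^ ((1/2):ℝ)) := by
            apply Finset.sum_le_sum
            intro m hm
            simp only [Finset.mem_Icc] at hm
            have hm0 : m ≠ 0 := by omega
            exact hgB m hm0
    have hIle2 : ∑ m ∈ Finset.Icc 1 s, (B * (m:ℝ) ^ ((1/2):ℝ))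
        ≤ (s:ℝ) * (B * y ^ ((1/4):ℝ)) := by
      have hbd : ∀ m ∈ Finset.Icc 1 s, B * (m:ℝ) ^ ((1/2):ℝ) ≤ B * y ^ ((1/4):ℝ) := by
        intro m hm
        simp only [Finset.mem_Icc] at hm
        apply mul_le_mul_of_nonneg_left _ hBpos.le
        calc (m:ℝ) ^ ((1/2):ℝ) ≤ (s:ℝ) ^ ((1/2):ℝ) :=
              Real.rpow_le_rpow (Nat.cast_nonneg m) (by exact_mod_cast hm.2) (by norm_num)
          _ ≤ y ^ ((1/4):ℝ) := hy14
      calc ∑ m ∈ Finset.Icc 1 s, (B * (m:ℝ) ^ ((1/2):ℝ))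
          ≤ (Finset.Icc 1 s).card • (B * y ^ ((1/4):ℝ)) :=
            Finset.sum_le_card_nsmul _ _ _ hbd
        _ = (s:ℝ) * (B * y ^ ((1/4):ℝ)) := by
            rw [Nat.card_Icc, nsmul_eq_mul]
            norm_num
    have hfin : (s:ℝ) * (B * y ^ ((1/4):ℝ)) ≤ B * y ^ ((3/4):ℝ) := by
      calc (s:ℝ) * (B * y ^ ((1/4):ℝ)) ≤ y ^ ((1/2):ℝ) * (B * y ^ ((1/4):ℝ)) :=
            mul_le_mul_of_nonneg_right hsy (by positivity)
        _ = B * (y ^ ((1/2):ℝ) * y ^ ((1/4):ℝ)) := by ring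
        _ = B * y ^ ((3/4):ℝ) := by
            rw [← Real.rpow_add hy0]; norm_num
    exact hIle1.trans (hIle2.trans hfin)
  -- Step 5 : split the outer sum
  set T₀ := ⌊δ * x⌋₊ with hT₀def
  have hδx0 : (0:ℝ) ≤ δ * x := by positivity
  have hx34 : x ^ ((3/4):ℝ) * x ^ ((1/4):ℝ) = x := by
    rw [← Real.rpow_add hx0]; norm_num
  have hpartA : ∑ t ∈ F.filter (fun t => t ≤ T₀), (K * c t) * I t
      ≤ 16 * K * B * C₂ * (δ ^ ((1/4):ℝ)) * x := by
    calc ∑ t ∈ F.filter (fun t => t ≤ T₀), (K * c t) * I t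
        ≤ ∑ t ∈ F.filter (fun t => t ≤ T₀),
            (K * B * x ^ ((3/4):ℝ)) * (c t * (t:ℝ) ^ (-(3/4):ℝ)) := by
          apply Finset.sum_le_sum
          intro t ht
          have htF := Finset.mem_of_mem_filter t ht
          have htmem := htF
          simp only [hFdef, Finset.mem_filter, Finset.mem_Icc] at htmem
          obtain ⟨⟨ht1, htN⟩, _⟩ := htmem
          have ht0 : (0:ℝ) < (t:ℝ) := by exact_mod_cast ht1
          have h1 : I t ≤ B * ((N:ℝ)/(t:ℝ)) ^ ((3/4):ℝ) := hI t htF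
          have h2 : ((N:ℝ)/(t:ℝ)) ^ ((3/4):ℝ) ≤ (x/(t:ℝ)) ^ ((3/4):ℝ) := by
            apply Real.rpow_le_rpow (by positivity) _ (by norm_num)
            gcongr
          have h3 : (x/(t:ℝ)) ^ ((3/4):ℝ) = x ^ ((3/4):ℝ) * (t:ℝ) ^ (-(3/4):ℝ) := by
            rw [Real.div_rpow hx0.le ht0.le, Real.rpow_neg ht0.le, div_eq_mul_inv]
          calc (K * c t) * I t ≤ (K * c t) * (B * (x/(t:ℝ)) ^ ((3/4):ℝ)) := by
                apply mul_le_mul_of_nonneg_left _ (mul_nonneg hK.le (hc t))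
                exact h1.trans (by exact mul_le_mul_of_nonneg_left h2 hBpos.le)
            _ = (K * B * x ^ ((3/4):ℝ)) * (c t * (t:ℝ) ^ (-(3/4):ℝ)) := by
                rw [h3]; ring
      _ = (K * B * x ^ ((3/4):ℝ)) *
            ∑ t ∈ F.filter (fun t => t ≤ T₀), (c t * (t:ℝ) ^ (-(3/4):ℝ)) := by
          rw [Finset.mul_sum]
      _ ≤ (K * B * x ^ ((3/4):ℝ)) * ∑ t ∈ Finset.Ioc 0 T₀, (c t * (t:ℝ) ^ (-(3/4):ℝ)) := by
          apply mul_le_mul_of_nonneg_left _ (by positivity)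
          apply Finset.sum_le_sum_of_subset_of_nonneg
          · intro t ht
            simp only [hFdef, Finset.mem_filter, Finset.mem_Icc] at ht
            simp only [Finset.mem_Ioc]
            omega
          · intro t _ _
            exact mul_nonneg (hc t) (Real.rpow_nonneg (Nat.cast_nonneg t) _)
      _ ≤ (K * B * x ^ ((3/4):ℝ)) * (16 * C₂ * (T₀:ℝ) ^ ((1/4):ℝ)) := by
          apply mul_le_mul_of_nonneg_left (hps T₀) (by positivity)
      _ ≤ 16 * K * B * C₂ * (δ ^ ((1/4):ℝ)) * x := by
          have h1 : ((T₀:ℝ)) ^ ((1/4):ℝ) ≤ (δ * x) ^ ((1/4):ℝ) :=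
            Real.rpow_le_rpow (Nat.cast_nonneg _) (Nat.floor_le hδx0) (by norm_num)
          have h2 : (δ * x) ^ ((1/4):ℝ) = δ ^ ((1/4):ℝ) * x ^ ((1/4):ℝ) :=
            Real.mul_rpow hδ0.le hx0.le
          calc (K * B * x ^ ((3/4):ℝ)) * (16 * C₂ * (T₀:ℝ) ^ ((1/4):ℝ))
              ≤ (K * B * x ^ ((3/4):ℝ)) * (16 * C₂ * (δ ^ ((1/4):ℝ) * x ^ ((1/4):ℝ))) := by
                apply mul_le_mul_of_nonneg_left _ (by positivity)
                apply mul_le_mul_of_nonneg_left _ (by positivity)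
                rw [← h2]; exact h1
            _ = 16 * K * B * C₂ * (δ ^ ((1/4):ℝ)) * (x ^ ((3/4):ℝ) * x ^ ((1/4):ℝ)) := by ring
            _ = 16 * K * B * C₂ * (δ ^ ((1/4):ℝ)) * x := by rw [hx34]
  have hA2 : 16 * K * B * C₂ * (δ ^ ((1/4):ℝ)) * x ≤ (r/4) * x := by
    have h1 : 16 * K * B * C₂ * (δ ^ ((1/4):ℝ)) ≤ 16 * K * B * C₂ * d :=
      mul_le_mul_of_nonneg_left hδ4 (by positivity)
    have h2 : 16 * K * B * C₂ * d = r/4 := by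
      rw [hd_def]; field_simp; ring
    have h3 : 16 * K * B * C₂ * (δ ^ ((1/4):ℝ)) ≤ r/4 := by rw [← h2]; exact h1
    exact mul_le_mul_of_nonneg_right h3 hx0.le
  have hpartB : ∑ t ∈ F.filter (fun t => ¬ t ≤ T₀), (K * c t) * I t ≤ K * B * Dδ * Q := by
    calc ∑ t ∈ F.filter (fun t => ¬ t ≤ T₀), (K * c t) * I t
        ≤ ∑ t ∈ F.filter (fun t => ¬ t ≤ T₀), (K * B * Dδ) * c t := by
          apply Finset.sum_le_sum
          intro t ht
          have htF := Finset.mem_of_mem_filter t ht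
          have htT : ¬ t ≤ T₀ := (Finset.mem_filter.mp ht).2
          have htmem := htF
          simp only [hFdef, Finset.mem_filter, Finset.mem_Icc] at htmem
          obtain ⟨⟨ht1, htN⟩, _⟩ := htmem
          have ht0 : (0:ℝ) < (t:ℝ) := by exact_mod_cast ht1
          have htgt : δ * x < (t:ℝ) := by
            have h1 : δ * x < (T₀:ℝ) + 1 := Nat.lt_floor_add_one _
            have h2 : T₀ + 1 ≤ t := by omega
            have h3 : ((T₀:ℝ)) + 1 ≤ (t:ℝ) := by exact_mod_cast h2
            linarith
          have hyd : (N:ℝ)/(t:ℝ) ≤ 1/δ := by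
            rw [div_le_div_iff₀ ht0 hδ0]
            calc (N:ℝ) * δ = δ * (N:ℝ) := by ring
              _ ≤ δ * x := mul_le_mul_of_nonneg_left hNx hδ0.le
              _ ≤ (t:ℝ) * 1 := by linarith
              _ = 1 * (t:ℝ) := by ring
          have h4 : ((N:ℝ)/(t:ℝ)) ^ ((3/4):ℝ) ≤ Dδ := by
            rw [hDδ_def]
            exact Real.rpow_le_rpow (by positivity) hyd (by norm_num)
          calc (K * c t) * I t ≤ (K * c t) * (B * Dδ) := by
                apply mul_le_mul_of_nonneg_left _ (mul_nonneg hK.le (hc t))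
                exact (hI t htF).trans (mul_le_mul_of_nonneg_left h4 hBpos.le)
            _ = (K * B * Dδ) * c t := by ring
      _ = (K * B * Dδ) * ∑ t ∈ F.filter (fun t => ¬ t ≤ T₀), c t := by
          rw [Finset.mul_sum]
      _ ≤ K * B * Dδ * Q := by
          apply mul_le_mul_of_nonneg_left _ (by positivity)
          exact Finset.sum_le_sum_of_subset_of_nonneg (Finset.filter_subset _ _)
            (fun t _ _ => hc t)
  -- combine everything
  have hsum_split : ∑ t ∈ F, (K * c t) * I t
      = ∑ t ∈ F.filter (fun t => t ≤ T₀), (K * c t) * I t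
        + ∑ t ∈ F.filter (fun t => ¬ t ≤ T₀), (K * c t) * I t :=
    (Finset.sum_filter_add_sum_filter_not F _ _).symm
  have hchain : r * x - C * x ^ (β:ℝ) ≤ (r/4) * x + K * B * Dδ * Q := by
    calc r * x - C * x ^ (β:ℝ) ≤ ∑ n ∈ Finset.Icc 1 N, c n := hSge x hx1
      _ ≤ ∑ p ∈ P, c (p.1 * p.2 ^ 2) := hstep1
      _ ≤ ∑ p ∈ P, (K * c p.1) * ((p.2.divisors.card : ℝ) ^ 2 * psi p.2 ^ 2) := hstep2
      _ = ∑ t ∈ F, (K * c t) * I t := hstep3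
      _ = _ + _ := hsum_split
      _ ≤ (r/4) * x + K * B * Dδ * Q := add_le_add (hpartA.trans hA2) hpartB
  have hfinal : (r/2) * x ≤ K * B * Dδ * Q := by linarith
  rw [div_mul_eq_mul_div, div_le_iff₀ (by positivity : (0:ℝ) < 2 * K * B * Dδ)]
  linarith
end
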